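/- Let Q(x_{0:K}) = π_0(x_0) ∏_{k=1}^K F_k(x_k|x_{k-1}) be a Markov proposal with marginals q_k, and let P(x_{0:K}) = π(x_K) ∏_{k=0}^{K-1} B_k(x_k|x_{k+1}) for backward Markov kernels B_k. Then KL(Q||P) = KL(q_K||π) + E_{q_K}[KL(Q(·|x_K)||P(·|x_K))], and hence KL(Q||P) is minimized over choices of backward kernels by B_k^{opt}(x_k|x_{k+1}) = q_k(x_k)F_{k+1}(x_{k+1}|x_k)/q_{k+1}(x_{k+1}), achieving the minimum value KL(q_K||π). -/

import Mathlib

open MeasureTheory Finset Filter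

set_option linter.unusedSectionVars false

section AisAux
variable {α : Type*} [MeasureSpace α] [SigmaFinite (volume : Measure α)]

lemma ais_ins_zero {n : ℕ} (a : α) (r : Fin (n+1) → α) :
    Fin.insertNth (α := fun _ => α) 0 a r 0 = a := by simp

lemma ais_ins_succ {n : ℕ} (a : α) (r : Fin (n+1) → α) (j : Fin (n+1)) :
    Fin.insertNth (α := fun _ => α) 0 a r j.succ = r j := by
  rw [← Fin.zero_succAbove j, Fin.insertNth_apply_succAbove]

lemma ais_int_of_ne {f : α → ℝ} (h : (∫ x, f x) ≠ 0) : Integrable f volume := by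
  by_contra hc; exact h (integral_undef hc)

lemma ais_prod_ratio {K : ℕ} (g : Fin (K+1) → ℝ) (f : Fin K → ℝ) (hg : ∀ j, g j ≠ 0) :
    ∏ k : Fin K, g k.castSucc * f k / g k.succ
      = g 0 * (∏ k, f k) / g (Fin.last K) := by
  have h1 : ∏ j : Fin (K+1), g j = (∏ k : Fin K, g k.castSucc) * g (Fin.last K) :=
    Fin.prod_univ_castSucc g
  have h2 : ∏ j : Fin (K+1), g j = g 0 * ∏ k : Fin K, g k.succ := Fin.prod_univ_succ g
  have h3 : ∏ k : Fin K, g k.castSucc * f k / g k.succ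
      = ((∏ k : Fin K, g k.castSucc) * ∏ k, f k) / ∏ k : Fin K, g k.succ := by
    rw [Finset.prod_div_distrib, Finset.prod_mul_distrib]
  rw [h3]
  have h4 : (∏ k : Fin K, g k.succ) ≠ 0 := Finset.prod_ne_zero_iff.2 fun k _ => hg _
  have h5 : g (Fin.last K) ≠ 0 := hg _
  field_simp
  linear_combination (∏ k, f k) * (h1.symm.trans h2)

lemma ais_marg :
    ∀ (K : ℕ) (F : Fin K → α → α → ℝ) (q : Fin (K + 1) → α → ℝ),
      (∀ (k : Fin K) (x : α), q k.succ x = ∫ y, q k.castSucc y * F k y x) →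
      ∀ h : α → ℝ,
      Integrable (fun x : Fin (K + 1) → α =>
        (q 0 (x 0) * ∏ k : Fin K, F k (x k.castSucc) (x k.succ)) * h (x (Fin.last K))) →
      (∫ x : Fin (K + 1) → α,
          (q 0 (x 0) * ∏ k : Fin K, F k (x k.castSucc) (x k.succ)) * h (x (Fin.last K)))
        = ∫ y, q (Fin.last K) y * h y := by
  intro K
  induction K with
  | zero =>
    intro F q hqrec h hint
    rw [← (volume_preserving_funUnique (Fin 1) α).integral_comp'
      (fun y => q (Fin.last 0) y * h y)]
    congr 1
    funext x
    have h0 : (Fin.last 0) = (0 : Fin 1) := rfl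
    have hE : (MeasurableEquiv.funUnique (Fin 1) α) x = x 0 := rfl
    rw [hE, h0]
    simp
  | succ K IH =>
    intro F q hqrec h hint
    set E := MeasurableEquiv.piFinSuccAbove (fun _ : Fin (K+2) => α) 0 with hEdef
    have MP : MeasurePreserving E (volume : Measure (Fin (K+2) → α))
        ((volume : Measure α).prod (volume : Measure (Fin (K+1) → α))) :=
      volume_preserving_piFinSuccAbove _ 0
    have MPs := MP.symm E
    set G := fun x : Fin (K+2) → α =>
      (q 0 (x 0) * ∏ k : Fin (K+1), F k (x k.castSucc) (x k.succ)) * h (x (Fin.last (K+1)))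
      with hGdef
    have hGE : Integrable (fun z : α × (Fin (K+1) → α) => G (E.symm z))
        ((volume : Measure α).prod volume) :=
      (MPs.integrable_comp_emb E.symm.measurableEmbedding).2 hint
    -- pointwise computation of the section and its integral
    have hsec : ∀ r : Fin (K+1) → α, (∫ a, G (E.symm (a, r)))
        = (q ((0 : Fin (K+1)).succ) (r 0) *
            ∏ k : Fin K, F k.succ (r k.castSucc) (r k.succ)) * h (r (Fin.last K)) := by
      intro r
      have hx : ∀ a : α, G (E.symm (a, r))
          = (q 0 a * F 0 a (r 0)) *
            ((∏ k : Fin K, F k.succ (r k.castSucc) (r k.succ)) * h (r (Fin.last K))) := by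
        intro a
        show G (Fin.insertNth (α := fun _ => α) 0 a r) = _
        rw [hGdef]
        simp only [ais_ins_zero]
        rw [Fin.prod_univ_succ]
        rw [show Fin.last (K+1) = (Fin.last K).succ from (Fin.succ_last K).symm]
        rw [ais_ins_succ]
        rw [show ((0 : Fin (K+1)).castSucc) = (0 : Fin (K+2)) from Fin.castSucc_zero]
        rw [ais_ins_zero, ais_ins_succ]
        have : ∀ k : Fin K,
            F k.succ (Fin.insertNth (α := fun _ => α) 0 a r k.succ.castSucc)
              (Fin.insertNth (α := fun _ => α) 0 a r k.succ.succ)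
            = F k.succ (r k.castSucc) (r k.succ) := by
          intro k
          rw [← Fin.succ_castSucc, ais_ins_succ, ais_ins_succ]
        rw [Finset.prod_congr rfl fun k _ => this k]
        ring
      calc (∫ a, G (E.symm (a, r)))
          = (∫ a, q 0 a * F 0 a (r 0)) *
            ((∏ k : Fin K, F k.succ (r k.castSucc) (r k.succ)) * h (r (Fin.last K))) := by
            simp_rw [hx]; exact integral_mul_const _ _
        _ = _ := by
            rw [show (∫ a, q 0 a * F 0 a (r 0))
                = q ((0 : Fin (K+1)).succ) (r 0) by
              rw [hqrec 0 (r 0)]; simp]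
            ring
    have hmarg : Integrable (fun r : Fin (K+1) → α =>
        (q ((0 : Fin (K+1)).succ) (r 0) *
          ∏ k : Fin K, F k.succ (r k.castSucc) (r k.succ)) * h (r (Fin.last K))) volume := by
      have := hGE.integral_prod_right
      refine this.congr (Eventually.of_forall fun r => hsec r)
    have hIH := IH (fun k => F k.succ) (fun j => q j.succ)
      (by
        intro k x
        have := hqrec k.succ x
        rwa [← Fin.succ_castSucc] at this) h hmarg
    calc (∫ x : Fin (K+2) → α, G x)
        = ∫ z : α × (Fin (K+1) → α), G (E.symm z) ∂((volume : Measure α).prod volume) :=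
          (MPs.integral_comp' G).symm
      _ = ∫ r, ∫ a, G (E.symm (a, r)) := integral_prod_symm _ hGE
      _ = ∫ r : Fin (K+1) → α, (q ((0 : Fin (K+1)).succ) (r 0) *
            ∏ k : Fin K, F k.succ (r k.castSucc) (r k.succ)) * h (r (Fin.last K)) := by
          exact integral_congr_ae (Eventually.of_forall fun r => hsec r)
      _ = ∫ y, q ((Fin.last K).succ) y * h y := hIH
      _ = ∫ y, q (Fin.last (K+1)) y * h y := by rw [Fin.succ_last]

lemma ais_gibbs :
    ∀ (K : ℕ) (F B : Fin K → α → α → ℝ) (q : Fin (K + 1) → α → ℝ),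
      (∀ (k : Fin K) (x : α), q k.succ x = ∫ y, q k.castSucc y * F k y x) →
      (∀ k x, 0 < q k x) → (∀ k y x, 0 < F k y x) → (∀ k y x, 0 < B k y x) →
      (∀ (k : Fin K) (y : α), (∫ x, B k y x) = 1) →
      ∀ J : (Fin (K + 1) → α) → ℝ, Integrable J volume →
      (∀ᵐ x : Fin (K+1) → α,
        (q 0 (x 0) * ∏ k : Fin K, F k (x k.castSucc) (x k.succ)) *
          Real.log ((∏ k : Fin K, q k.castSucc (x k.castSucc) * F k (x k.castSucc) (x k.succ) /
              q k.succ (x k.succ)) / (∏ k : Fin K, B k (x k.succ) (x k.castSucc))) ≤ J x) →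
      0 ≤ ∫ x, J x := by
  intro K
  induction K with
  | zero =>
    intro F B q hqrec hqpos hFpos hBpos hBnorm J hJ hle
    refine integral_nonneg_of_ae ?_
    filter_upwards [hle] with x hx
    simpa using hx
  | succ K IH =>
    intro F B q hqrec hqpos hFpos hBpos hBnorm J hJ hle
    set E := MeasurableEquiv.piFinSuccAbove (fun _ : Fin (K+2) => α) 0 with hEdef
    have MP : MeasurePreserving E (volume : Measure (Fin (K+2) → α))
        ((volume : Measure α).prod (volume : Measure (Fin (K+1) → α))) :=
      volume_preserving_piFinSuccAbove _ 0
    have MPs := MP.symm E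
    set C := fun x : Fin (K+2) → α =>
      (q 0 (x 0) * ∏ k : Fin (K+1), F k (x k.castSucc) (x k.succ)) *
        Real.log ((∏ k : Fin (K+1), q k.castSucc (x k.castSucc) * F k (x k.castSucc) (x k.succ) /
            q k.succ (x k.succ)) / (∏ k : Fin (K+1), B k (x k.succ) (x k.castSucc))) with hCdef
    set JE := fun z : α × (Fin (K+1) → α) => J (E.symm z) with hJEdef
    have hJE : Integrable JE ((volume : Measure α).prod volume) :=
      (MPs.integrable_comp_emb E.symm.measurableEmbedding).2 hJ
    have haeJE : ∀ᵐ z ∂((volume : Measure α).prod volume), C (E.symm z) ≤ JE z :=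
      MPs.quasiMeasurePreserving.ae hle
    have hsw : ∀ᵐ w ∂((volume : Measure (Fin (K+1) → α)).prod (volume : Measure α)),
        C (E.symm w.swap) ≤ JE w.swap :=
      Measure.measurePreserving_swap.quasiMeasurePreserving.ae haeJE
    have haerr := Measure.ae_ae_of_ae_prod hsw
    have hsecInt : ∀ᵐ r : Fin (K+1) → α, Integrable (fun a => JE (a, r)) volume :=
      hJE.prod_left_ae
    -- the shifted-system data
    have hqrec' : ∀ (k : Fin K) (x : α),
        (fun j : Fin (K+1) => q j.succ) k.succ x
          = ∫ y, (fun j : Fin (K+1) => q j.succ) k.castSucc y * F k.succ y x := by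
      intro k x
      have := hqrec k.succ x
      rwa [← Fin.succ_castSucc] at this
    have hle' : ∀ᵐ r : Fin (K+1) → α,
        ((fun j : Fin (K+1) => q j.succ) 0 (r 0) *
            ∏ k : Fin K, F k.succ (r k.castSucc) (r k.succ)) *
          Real.log ((∏ k : Fin K,
              (fun j : Fin (K+1) => q j.succ) k.castSucc (r k.castSucc) *
                F k.succ (r k.castSucc) (r k.succ) /
                (fun j : Fin (K+1) => q j.succ) k.succ (r k.succ)) /
            (∏ k : Fin K, B k.succ (r k.succ) (r k.castSucc)))
          ≤ ∫ a, JE (a, r) := by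
      filter_upwards [haerr, hsecInt] with r hae hint
      set Q1 := q ((0 : Fin (K+1)).succ) (r 0) with hQ1def
      set Rr := ∏ k : Fin K, F k.succ (r k.castSucc) (r k.succ) with hRrdef
      set Prat := ∏ k : Fin K,
          q (k.castSucc.succ) (r k.castSucc) * F k.succ (r k.castSucc) (r k.succ) /
            q (k.succ.succ) (r k.succ) with hPratdef
      set PB := ∏ k : Fin K, B k.succ (r k.succ) (r k.castSucc) with hPBdef
      set Arat := Prat / PB with hAratdef
      set u := fun a : α => q 0 a * F 0 a (r 0) with hudef
      set b := fun a : α => B 0 (r 0) a with hbdef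
      have hqz : ∀ j x, q j x ≠ 0 := fun j x => (hqpos j x).ne'
      have hQ1pos : 0 < Q1 := hqpos _ _
      have hRrpos : 0 < Rr := Finset.prod_pos fun k _ => hFpos _ _ _
      have hPratpos : 0 < Prat := Finset.prod_pos fun k _ =>
        div_pos (mul_pos (hqpos _ _) (hFpos _ _ _)) (hqpos _ _)
      have hPBpos : 0 < PB := Finset.prod_pos fun k _ => hBpos _ _ _
      have hAratpos : 0 < Arat := div_pos hPratpos hPBpos
      have hupos : ∀ a, 0 < u a := fun a => mul_pos (hqpos _ _) (hFpos _ _ _)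
      have hbpos : ∀ a, 0 < b a := fun a => hBpos _ _ _
      have huint_eq : (∫ a, u a) = Q1 := by
        rw [hQ1def]
        rw [hqrec 0 (r 0)]
        simp [hudef]
      have hu_int : Integrable u volume := ais_int_of_ne (by rw [huint_eq]; exact hQ1pos.ne')
      have hb_int : Integrable b volume := ais_int_of_ne (by rw [hBnorm 0 (r 0)]; norm_num)
      -- pointwise expansion of C at the inserted point
      have hcx : ∀ a : α, C (E.symm (a, r))
          = (u a * Rr) * (Real.log (u a / (Q1 * b a)) + Real.log Arat) := by
        intro a
        show C (Fin.insertNth (α := fun _ => α) 0 a r) = _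
        rw [hCdef]
        simp only []
        rw [Fin.prod_univ_succ (fun k : Fin (K+1) => F k
          (Fin.insertNth (α := fun _ => α) 0 a r k.castSucc)
          (Fin.insertNth (α := fun _ => α) 0 a r k.succ))]
        rw [Fin.prod_univ_succ (fun k : Fin (K+1) =>
          q k.castSucc (Fin.insertNth (α := fun _ => α) 0 a r k.castSucc) *
            F k (Fin.insertNth (α := fun _ => α) 0 a r k.castSucc)
              (Fin.insertNth (α := fun _ => α) 0 a r k.succ) /
            q k.succ (Fin.insertNth (α := fun _ => α) 0 a r k.succ))]
        rw [Fin.prod_univ_succ (fun k : Fin (K+1) => B k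
          (Fin.insertNth (α := fun _ => α) 0 a r k.succ)
          (Fin.insertNth (α := fun _ => α) 0 a r k.castSucc))]
        have e0 : ((0 : Fin (K+1)).castSucc) = (0 : Fin (K+2)) := Fin.castSucc_zero
        have hsuccterm : ∀ k : Fin K,
            (Fin.insertNth (α := fun _ => α) 0 a r k.succ.castSucc) = r k.castSucc := by
          intro k; rw [← Fin.succ_castSucc, ais_ins_succ]
        have hFt : (∏ k : Fin K, F k.succ
            (Fin.insertNth (α := fun _ => α) 0 a r k.succ.castSucc)
            (Fin.insertNth (α := fun _ => α) 0 a r k.succ.succ)) = Rr := by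
          refine Finset.prod_congr rfl fun k _ => ?_
          rw [hsuccterm, ais_ins_succ]
        have hqt : (∏ k : Fin K,
            q k.succ.castSucc (Fin.insertNth (α := fun _ => α) 0 a r k.succ.castSucc) *
              F k.succ (Fin.insertNth (α := fun _ => α) 0 a r k.succ.castSucc)
                (Fin.insertNth (α := fun _ => α) 0 a r k.succ.succ) /
              q k.succ.succ (Fin.insertNth (α := fun _ => α) 0 a r k.succ.succ)) = Prat := by
          refine Finset.prod_congr rfl fun k _ => ?_
          rw [hsuccterm, ais_ins_succ, Fin.succ_castSucc]
        have hBt : (∏ k : Fin K, B k.succ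
            (Fin.insertNth (α := fun _ => α) 0 a r k.succ.succ)
            (Fin.insertNth (α := fun _ => α) 0 a r k.succ.castSucc)) = PB := by
          refine Finset.prod_congr rfl fun k _ => ?_
          rw [hsuccterm, ais_ins_succ]
        rw [hFt, hqt, hBt, e0, ais_ins_zero, ais_ins_succ]
        have harg : (q 0 a * F 0 a (r 0) / q ((0 : Fin (K+1)).succ) (r 0) * Prat) /
            (B 0 (r 0) a * PB) = (u a / (Q1 * b a)) * Arat := by
          rw [hudef, hbdef, hAratdef, hQ1def]
          field_simp
        rw [harg]
        rw [Real.log_mul (div_pos (hupos a) (mul_pos hQ1pos (hbpos a))).ne' hAratpos.ne']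
        ring
      -- the integrable lower bound
      set L := fun a : α => Rr * (u a - Q1 * b a) + (u a * Rr) * Real.log Arat with hLdef
      have hL1 : Integrable (fun a => Rr * (u a - Q1 * b a)) volume :=
        ((hu_int.sub (hb_int.const_mul Q1)).const_mul Rr)
      have hL2 : Integrable (fun a => (u a * Rr) * Real.log Arat) volume :=
        (hu_int.mul_const Rr).mul_const _
      have hL_int : Integrable L volume := hL1.add hL2
      have hLle : ∀ᵐ a : α, L a ≤ JE (a, r) := by
        filter_upwards [hae] with a haea
        have haea' : C (E.symm (a, r)) ≤ JE (a, r) := haea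
        refine le_trans ?_ haea'
        rw [hcx a, hLdef]
        have hbnd : Rr * (u a - Q1 * b a) ≤ (u a * Rr) * Real.log (u a / (Q1 * b a)) := by
          have hy : (0:ℝ) < u a / (Q1 * b a) := div_pos (hupos a) (mul_pos hQ1pos (hbpos a))
          have h1 : Real.log ((Q1 * b a) / u a) ≤ (Q1 * b a) / u a - 1 :=
            Real.log_le_sub_one_of_pos (div_pos (mul_pos hQ1pos (hbpos a)) (hupos a))
          have h2 : Real.log ((Q1 * b a) / u a) = - Real.log (u a / (Q1 * b a)) := by
            rw [← Real.log_inv]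
            congr 1
            rw [inv_div]
          rw [h2] at h1
          have h3 : 1 - (Q1 * b a) / u a ≤ Real.log (u a / (Q1 * b a)) := by linarith
          have h4 := mul_le_mul_of_nonneg_left h3
            (le_of_lt (mul_pos (hupos a) hRrpos) : (0:ℝ) ≤ u a * Rr)
          have h5 : (u a * Rr) * (1 - (Q1 * b a) / u a) = Rr * (u a - Q1 * b a) := by
            have hua : u a ≠ 0 := (hupos a).ne'
            field_simp
          linarith [h4, h5.symm.le, h5.le]
        linarith [hbnd]
      have hmono := integral_mono_ae hL_int hint hLle
      have hLval : (∫ a, L a) = (Q1 * Rr) * Real.log Arat := by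
        rw [hLdef]
        rw [integral_add hL1 hL2, integral_const_mul,
          integral_sub hu_int (hb_int.const_mul Q1), integral_const_mul,
          integral_mul_const, integral_mul_const, huint_eq, hBnorm 0 (r 0)]
        ring
      calc ((fun j : Fin (K+1) => q j.succ) 0 (r 0) * Rr) * Real.log Arat
          = (Q1 * Rr) * Real.log Arat := rfl
        _ = ∫ a, L a := hLval.symm
        _ ≤ ∫ a, JE (a, r) := hmono
    have hJ'int : Integrable (fun r : Fin (K+1) → α => ∫ a, JE (a, r)) volume :=
      hJE.integral_prod_right
    have h0 := IH (fun k => F k.succ) (fun k => B k.succ) (fun j => q j.succ)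
      hqrec' (fun k x => hqpos _ _) (fun k y x => hFpos _ _ _) (fun k y x => hBpos _ _ _)
      (fun k y => hBnorm _ _) (fun r => ∫ a, JE (a, r)) hJ'int hle'
    calc (0:ℝ) ≤ ∫ r : Fin (K+1) → α, ∫ a, JE (a, r) := h0
      _ = ∫ z : α × (Fin (K+1) → α), JE z ∂((volume : Measure α).prod volume) :=
          (integral_prod_symm _ hJE).symm
      _ = ∫ x, J x := MPs.integral_comp' J

end AisAux

/-- KL chain rule for AIS extended distributions and optimality of the
time-reversal backward kernels. `F k y x` is the density of moving from `y`
to `x` at step `k+1`; `B k y x` is the backward density of `x_k = x` given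
`x_{k+1} = y`. -/
theorem ais_kl_chain_rule_and_optimal_backward_kernels
    (d K : ℕ)
    (π0 π : (Fin d → ℝ) → ℝ)
    (F : Fin K → (Fin d → ℝ) → (Fin d → ℝ) → ℝ)
    (B : Fin K → (Fin d → ℝ) → (Fin d → ℝ) → ℝ)
    (q : Fin (K + 1) → (Fin d → ℝ) → ℝ)
    (hq0 : q 0 = π0)
    (hqrec : ∀ (k : Fin K) (x : Fin d → ℝ),
      q k.succ x = ∫ y, q k.castSucc y * F k y x)
    (hπ0pos : ∀ x, 0 < π0 x) (hπpos : ∀ x, 0 < π x)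
    (hπ0norm : (∫ x, π0 x) = 1) (hπnorm : (∫ x, π x) = 1)
    (hFpos : ∀ k y x, 0 < F k y x) (hBpos : ∀ k y x, 0 < B k y x)
    (hqpos : ∀ k x, 0 < q k x)
    (hFnorm : ∀ (k : Fin K) (y : Fin d → ℝ), (∫ x, F k y x) = 1)
    (hBnorm : ∀ (k : Fin K) (y : Fin d → ℝ), (∫ x, B k y x) = 1)
    (hQP_int : Integrable (fun x : Fin (K + 1) → Fin d → ℝ =>
      (π0 (x 0) * ∏ k : Fin K, F k (x k.castSucc) (x k.succ)) *
        Real.log ((π0 (x 0) * ∏ k : Fin K, F k (x k.castSucc) (x k.succ)) /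
          (π (x (Fin.last K)) * ∏ k : Fin K, B k (x k.succ) (x k.castSucc)))))
    (hKLfin_int : Integrable (fun y : Fin d → ℝ =>
      q (Fin.last K) y * Real.log (q (Fin.last K) y / π y)))
    (hcond_int : Integrable (fun x : Fin (K + 1) → Fin d → ℝ =>
      (π0 (x 0) * ∏ k : Fin K, F k (x k.castSucc) (x k.succ)) *
        Real.log ((∏ k : Fin K,
            q k.castSucc (x k.castSucc) * F k (x k.castSucc) (x k.succ) /
              q k.succ (x k.succ)) /
          (∏ k : Fin K, B k (x k.succ) (x k.castSucc))))) :
    -- KL(Q||P) = KL(q_K||π) + E_{q_K}[KL(Q(·|x_K)||P(·|x_K))]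
    ((∫ x : Fin (K + 1) → Fin d → ℝ,
        (π0 (x 0) * ∏ k : Fin K, F k (x k.castSucc) (x k.succ)) *
          Real.log ((π0 (x 0) * ∏ k : Fin K, F k (x k.castSucc) (x k.succ)) /
            (π (x (Fin.last K)) * ∏ k : Fin K, B k (x k.succ) (x k.castSucc))))
      = (∫ y, q (Fin.last K) y * Real.log (q (Fin.last K) y / π y)) +
        (∫ x : Fin (K + 1) → Fin d → ℝ,
          (π0 (x 0) * ∏ k : Fin K, F k (x k.castSucc) (x k.succ)) *
            Real.log ((∏ k : Fin K,
                q k.castSucc (x k.castSucc) * F k (x k.castSucc) (x k.succ) /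
                  q k.succ (x k.succ)) /
              (∏ k : Fin K, B k (x k.succ) (x k.castSucc)))))
    ∧
    -- the optimal backward kernels B_k^opt achieve KL(Q||P^opt) = KL(q_K||π)
    ((∫ x : Fin (K + 1) → Fin d → ℝ,
        (π0 (x 0) * ∏ k : Fin K, F k (x k.castSucc) (x k.succ)) *
          Real.log ((π0 (x 0) * ∏ k : Fin K, F k (x k.castSucc) (x k.succ)) /
            (π (x (Fin.last K)) * ∏ k : Fin K,
              q k.castSucc (x k.castSucc) * F k (x k.castSucc) (x k.succ) /
                q k.succ (x k.succ))))
      = ∫ y, q (Fin.last K) y * Real.log (q (Fin.last K) y / π y))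
    ∧
    -- KL(q_K||π) is a lower bound for any choice of backward kernels B
    ((∫ y, q (Fin.last K) y * Real.log (q (Fin.last K) y / π y)) ≤
      ∫ x : Fin (K + 1) → Fin d → ℝ,
        (π0 (x 0) * ∏ k : Fin K, F k (x k.castSucc) (x k.succ)) *
          Real.log ((π0 (x 0) * ∏ k : Fin K, F k (x k.castSucc) (x k.succ)) /
            (π (x (Fin.last K)) * ∏ k : Fin K, B k (x k.succ) (x k.castSucc)))) := by
  subst hq0
  -- positivity facts
  have hQXpos : ∀ x : Fin (K + 1) → Fin d → ℝ,
      0 < q 0 (x 0) * ∏ k : Fin K, F k (x k.castSucc) (x k.succ) :=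
    fun x => mul_pos (hqpos _ _) (Finset.prod_pos fun k _ => hFpos _ _ _)
  have hPBpos : ∀ x : Fin (K + 1) → Fin d → ℝ,
      0 < ∏ k : Fin K, B k (x k.succ) (x k.castSucc) :=
    fun x => Finset.prod_pos fun k _ => hBpos _ _ _
  have hPRpos : ∀ x : Fin (K + 1) → Fin d → ℝ,
      0 < ∏ k : Fin K, q k.castSucc (x k.castSucc) * F k (x k.castSucc) (x k.succ) /
        q k.succ (x k.succ) :=
    fun x => Finset.prod_pos fun k _ =>
      div_pos (mul_pos (hqpos _ _) (hFpos _ _ _)) (hqpos _ _)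
  -- the telescoping identity
  have tele : ∀ x : Fin (K + 1) → Fin d → ℝ,
      (∏ k : Fin K, q k.castSucc (x k.castSucc) * F k (x k.castSucc) (x k.succ) /
          q k.succ (x k.succ))
        = q 0 (x 0) * (∏ k : Fin K, F k (x k.castSucc) (x k.succ)) /
            q (Fin.last K) (x (Fin.last K)) := by
    intro x
    exact ais_prod_ratio (fun j => q j (x j)) (fun k => F k (x k.castSucc) (x k.succ))
      (fun j => (hqpos j (x j)).ne')
  -- log decomposition
  have key : ∀ x : Fin (K + 1) → Fin d → ℝ,
      Real.log ((q 0 (x 0) * ∏ k : Fin K, F k (x k.castSucc) (x k.succ)) /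
          (π (x (Fin.last K)) * ∏ k : Fin K, B k (x k.succ) (x k.castSucc)))
        = Real.log (q (Fin.last K) (x (Fin.last K)) / π (x (Fin.last K))) +
          Real.log ((∏ k : Fin K, q k.castSucc (x k.castSucc) *
              F k (x k.castSucc) (x k.succ) / q k.succ (x k.succ)) /
            (∏ k : Fin K, B k (x k.succ) (x k.castSucc))) := by
    intro x
    have hA := hQXpos x
    have hπx := hπpos (x (Fin.last K))
    have hqL := hqpos (Fin.last K) (x (Fin.last K))
    have hPB := hPBpos x
    rw [tele x]
    rw [Real.log_div hA.ne' (mul_pos hπx hPB).ne', Real.log_mul hπx.ne' hPB.ne',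
      Real.log_div hqL.ne' hπx.ne', Real.log_div (div_pos hA hqL).ne' hPB.ne',
      Real.log_div hA.ne' hqL.ne']
    ring
  -- optimal kernel ratio collapses
  have keyOpt : ∀ x : Fin (K + 1) → Fin d → ℝ,
      (q 0 (x 0) * ∏ k : Fin K, F k (x k.castSucc) (x k.succ)) /
          (π (x (Fin.last K)) * ∏ k : Fin K, q k.castSucc (x k.castSucc) *
            F k (x k.castSucc) (x k.succ) / q k.succ (x k.succ))
        = q (Fin.last K) (x (Fin.last K)) / π (x (Fin.last K)) := by
    intro x
    have hA := hQXpos x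
    have hπx := hπpos (x (Fin.last K))
    have hqL := hqpos (Fin.last K) (x (Fin.last K))
    rw [tele x]
    have hAne := hA.ne'
    have hπne := hπx.ne'
    have hqLne := hqL.ne'
    field_simp
    have hq0ne := (hqpos 0 (x 0)).ne'
    have hFne : (∏ k : Fin K, F k (x k.castSucc) (x k.succ)) ≠ 0 :=
      (Finset.prod_pos fun k _ => hFpos _ _ _).ne'
    field_simp
  -- integrability of Q · log(q_K/π)
  have hf1_int : Integrable (fun x : Fin (K + 1) → Fin d → ℝ =>
      (q 0 (x 0) * ∏ k : Fin K, F k (x k.castSucc) (x k.succ)) *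
        Real.log (q (Fin.last K) (x (Fin.last K)) / π (x (Fin.last K)))) := by
    refine (hQP_int.sub hcond_int).congr (ae_of_all _ fun x => ?_)
    simp only [Pi.sub_apply]
    rw [key x]
    ring
  -- marginal identity
  have hmarg := ais_marg K F q hqrec
    (fun y => Real.log (q (Fin.last K) y / π y)) hf1_int
  -- Part 1
  have part1 : (∫ x : Fin (K + 1) → Fin d → ℝ,
      (q 0 (x 0) * ∏ k : Fin K, F k (x k.castSucc) (x k.succ)) *
        Real.log ((q 0 (x 0) * ∏ k : Fin K, F k (x k.castSucc) (x k.succ)) /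
          (π (x (Fin.last K)) * ∏ k : Fin K, B k (x k.succ) (x k.castSucc))))
      = (∫ y, q (Fin.last K) y * Real.log (q (Fin.last K) y / π y)) +
        (∫ x : Fin (K + 1) → Fin d → ℝ,
          (q 0 (x 0) * ∏ k : Fin K, F k (x k.castSucc) (x k.succ)) *
            Real.log ((∏ k : Fin K,
                q k.castSucc (x k.castSucc) * F k (x k.castSucc) (x k.succ) /
                  q k.succ (x k.succ)) /
              (∏ k : Fin K, B k (x k.succ) (x k.castSucc)))) := by
    calc (∫ x : Fin (K + 1) → Fin d → ℝ,
        (q 0 (x 0) * ∏ k : Fin K, F k (x k.castSucc) (x k.succ)) *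
          Real.log ((q 0 (x 0) * ∏ k : Fin K, F k (x k.castSucc) (x k.succ)) /
            (π (x (Fin.last K)) * ∏ k : Fin K, B k (x k.succ) (x k.castSucc))))
        = ∫ x : Fin (K + 1) → Fin d → ℝ,
            ((q 0 (x 0) * ∏ k : Fin K, F k (x k.castSucc) (x k.succ)) *
              Real.log (q (Fin.last K) (x (Fin.last K)) / π (x (Fin.last K))) +
            (q 0 (x 0) * ∏ k : Fin K, F k (x k.castSucc) (x k.succ)) *
              Real.log ((∏ k : Fin K,
                  q k.castSucc (x k.castSucc) * F k (x k.castSucc) (x k.succ) /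
                    q k.succ (x k.succ)) /
                (∏ k : Fin K, B k (x k.succ) (x k.castSucc)))) := by
          refine integral_congr_ae (ae_of_all _ fun x => ?_)
          beta_reduce
          rw [key x]
          ring
      _ = _ := by
          rw [integral_add hf1_int hcond_int, hmarg]
  refine ⟨part1, ?_, ?_⟩
  · -- Part 2
    calc (∫ x : Fin (K + 1) → Fin d → ℝ,
        (q 0 (x 0) * ∏ k : Fin K, F k (x k.castSucc) (x k.succ)) *
          Real.log ((q 0 (x 0) * ∏ k : Fin K, F k (x k.castSucc) (x k.succ)) /
            (π (x (Fin.last K)) * ∏ k : Fin K,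
              q k.castSucc (x k.castSucc) * F k (x k.castSucc) (x k.succ) /
                q k.succ (x k.succ))))
        = ∫ x : Fin (K + 1) → Fin d → ℝ,
            (q 0 (x 0) * ∏ k : Fin K, F k (x k.castSucc) (x k.succ)) *
              Real.log (q (Fin.last K) (x (Fin.last K)) / π (x (Fin.last K))) := by
          refine integral_congr_ae (ae_of_all _ fun x => ?_)
          beta_reduce
          rw [keyOpt x]
      _ = _ := hmarg
  · -- Part 3
    rw [part1]
    have h0 : (0:ℝ) ≤ ∫ x : Fin (K + 1) → Fin d → ℝ,
        (q 0 (x 0) * ∏ k : Fin K, F k (x k.castSucc) (x k.succ)) *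
          Real.log ((∏ k : Fin K,
              q k.castSucc (x k.castSucc) * F k (x k.castSucc) (x k.succ) /
                q k.succ (x k.succ)) /
            (∏ k : Fin K, B k (x k.succ) (x k.castSucc))) :=
      ais_gibbs K F B q hqrec hqpos hFpos hBpos hBnorm _ hcond_int
        (ae_of_all _ fun x => le_refl _)
    linarith
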